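/- Let n ≥ 2 and let 𝒱ₚ ⊆ Mₙ(ℂ) be the subspace of matrices whose entries at positions (1,p), (1,p+1), …, (1,n) all vanish, where p = 2. Then A = E₁₁ is left-symmetric relative to 𝒱₂: for every B ∈ 𝒱₂, if E₁₁ ⊥ B then B ⊥ E₁₁ (Birkhoff–James orthogonality in operator norm). -/

import Mathlib

open Matrix

/-- The operator (spectral) norm of a complex matrix, induced by the Euclidean norm on `ℂⁿ`. -/
noncomputable def opNorm {n : ℕ} (A : Matrix (Fin n) (Fin n) ℂ) : ℝ :=
  ‖Matrix.toEuclideanCLM (𝕜 := ℂ) (n := Fin n) A‖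

/-- Birkhoff–James orthogonality of matrices with respect to the operator norm. -/
def BJ {n : ℕ} (A B : Matrix (Fin n) (Fin n) ℂ) : Prop :=
  ∀ c : ℂ, opNorm A ≤ opNorm (A + c • B)

set_option maxHeartbeats 1000000
set_option synthInstance.maxHeartbeats 200000

namespace Stmt10Aux

lemma aux_apply {n : ℕ} (A : Matrix (Fin n) (Fin n) ℂ) (x : EuclideanSpace ℂ (Fin n))
    (i : Fin n) :
    Matrix.toEuclideanCLM (𝕜 := ℂ) (n := Fin n) A x i = ∑ j, A i j * x j := rfl

lemma aux_norm_sq {n : ℕ} (x : EuclideanSpace ℂ (Fin n)) : ‖x‖ ^ 2 = ∑ i, ‖x i‖ ^ 2 := by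
  rw [EuclideanSpace.norm_eq, Real.sq_sqrt]; positivity

lemma opNorm_le_of_sq {n : ℕ} (A : Matrix (Fin n) (Fin n) ℂ) (C : ℝ) (hC : 0 ≤ C)
    (h : ∀ x : EuclideanSpace ℂ (Fin n),
      ‖Matrix.toEuclideanCLM (𝕜 := ℂ) (n := Fin n) A x‖ ^ 2 ≤ C ^ 2 * ‖x‖ ^ 2) :
    opNorm A ≤ C := by
  apply ContinuousLinearMap.opNorm_le_bound _ hC
  intro x
  have hx := h x
  nlinarith [norm_nonneg (Matrix.toEuclideanCLM (𝕜 := ℂ) (n := Fin n) A x), norm_nonneg x,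
    mul_nonneg hC (norm_nonneg x)]

lemma opNorm_E_ge {n : ℕ} (e0 : Fin n) :
    1 ≤ opNorm (Matrix.single e0 e0 (1 : ℂ)) := by
  set E := Matrix.single e0 e0 (1 : ℂ)
  set x : EuclideanSpace ℂ (Fin n) := EuclideanSpace.single e0 1
  have hx : ‖x‖ = 1 := by simp [x]
  have hEx : Matrix.toEuclideanCLM (𝕜 := ℂ) (n := Fin n) E x = x := by
    ext i
    rw [aux_apply]
    simp [E, x, Matrix.single, EuclideanSpace.single_apply, Finset.sum_ite_eq,
      eq_comm]
  have := (Matrix.toEuclideanCLM (𝕜 := ℂ) (n := Fin n) E).le_opNorm x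
  rw [hEx, hx, mul_one] at this
  simpa [opNorm] using this

end Stmt10Aux

open Stmt10Aux in
/-- `E₁₁` is left-symmetric relative to the space `𝒱₂` of matrices whose first row
vanishes except possibly at the `(1,1)` entry. -/
theorem stmt10 {n : ℕ} (hn : 2 ≤ n) (B : Matrix (Fin n) (Fin n) ℂ)
    (hBmem : ∀ j : Fin n, j ≠ ⟨0, by omega⟩ → B ⟨0, by omega⟩ j = 0)
    (h : BJ (Matrix.single (⟨0, by omega⟩ : Fin n) ⟨0, by omega⟩ (1 : ℂ)) B) :
    BJ B (Matrix.single (⟨0, by omega⟩ : Fin n) ⟨0, by omega⟩ (1 : ℂ)) := by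
  set e0 : Fin n := ⟨0, by omega⟩ with he0
  set E := Matrix.single e0 e0 (1 : ℂ) with hE
  have hErow : ∀ j : Fin n, E e0 j = if j = e0 then 1 else 0 := by
    intro j; simp [hE, Matrix.single, eq_comm]
  have hErow' : ∀ i j : Fin n, i ≠ e0 → E i j = 0 := by
    intro i j hi; simp [hE, Matrix.single, Ne.symm hi]
  -- Step 1 : B e0 e0 = 0
  have hb : B e0 e0 = 0 := by
    by_contra hb
    set b := B e0 e0 with hbdef
    set K : ℝ := opNorm B with hKdef
    have hK : 0 ≤ K := norm_nonneg _
    set β : ℝ := ‖b‖ with hβdef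
    have hβ : 0 < β := by simpa [hβdef] using (norm_pos_iff.mpr hb)
    set s : ℝ := β ^ 2 / (β ^ 2 + K ^ 2) with hsdef
    have hs0 : 0 < s := by positivity
    have hs1 : s ≤ 1 := by
      rw [hsdef, div_le_one (by positivity)]; nlinarith
    have hseq : s * (β ^ 2 + K ^ 2) = β ^ 2 := by
      rw [hsdef]; field_simp
    set c : ℂ := -(s : ℂ) / b with hcdef
    have hcb : c * b = -(s : ℂ) := by
      rw [hcdef]; field_simp
    have hcabs : ‖c‖ = s / β := by
      rw [hcdef, norm_div, norm_neg, Complex.norm_real, Real.norm_eq_abs, abs_of_pos hs0, hβdef]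
    -- the pointwise bound
    have key : ∀ x : EuclideanSpace ℂ (Fin n),
        ‖Matrix.toEuclideanCLM (𝕜 := ℂ) (n := Fin n) (E + c • B) x‖ ^ 2
          ≤ (1 - s) * ‖x‖ ^ 2 := by
      intro x
      set M := E + c • B with hM
      have hMe0 : Matrix.toEuclideanCLM (𝕜 := ℂ) (n := Fin n) M x e0
          = (1 + c * b) * x e0 := by
        rw [aux_apply]
        have : ∀ j : Fin n, M e0 j * x j = (if j = e0 then (1 + c * b) * x e0 else 0) := by
          intro j
          by_cases hj : j = e0
          · subst hj
            simp [hM, Matrix.add_apply, Matrix.smul_apply, hErow, ← hbdef, smul_eq_mul]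
            try ring
          · simp [hM, Matrix.add_apply, Matrix.smul_apply, hErow, hj, hBmem j hj,
              smul_eq_mul]
        rw [Finset.sum_congr rfl (fun j _ => this j), Finset.sum_ite_eq' Finset.univ e0]
        simp
      have hMi : ∀ i : Fin n, i ≠ e0 →
          Matrix.toEuclideanCLM (𝕜 := ℂ) (n := Fin n) M x i
            = c * Matrix.toEuclideanCLM (𝕜 := ℂ) (n := Fin n) B x i := by
        intro i hi
        rw [aux_apply, aux_apply, Finset.mul_sum]
        refine Finset.sum_congr rfl fun j _ => ?_
        simp [hM, Matrix.add_apply, Matrix.smul_apply, hErow' i j hi, smul_eq_mul]; ring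
      have hsplit : ‖Matrix.toEuclideanCLM (𝕜 := ℂ) (n := Fin n) M x‖ ^ 2
          = ‖(1 + c * b) * x e0‖ ^ 2
            + ∑ i ∈ Finset.univ.erase e0,
                ‖c * Matrix.toEuclideanCLM (𝕜 := ℂ) (n := Fin n) B x i‖ ^ 2 := by
        rw [aux_norm_sq, ← Finset.add_sum_erase _ _ (Finset.mem_univ e0), hMe0]
        congr 1
        exact Finset.sum_congr rfl fun i hi => by
          rw [hMi i (Finset.ne_of_mem_erase hi)]
      have hterm1 : ‖(1 + c * b) * x e0‖ ^ 2 ≤ (1 - s) ^ 2 * ‖x‖ ^ 2 := by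
        have h1 : ‖(1 + c * b : ℂ)‖ = 1 - s := by
          rw [hcb]
          have : (1 : ℂ) + -(s : ℂ) = ((1 - s : ℝ) : ℂ) := by push_cast; ring
          rw [this, Complex.norm_real, Real.norm_eq_abs, abs_of_nonneg (by linarith)]
        have h2 : ‖x e0‖ ^ 2 ≤ ‖x‖ ^ 2 := by
          rw [aux_norm_sq]
          exact Finset.single_le_sum (f := fun i => ‖x i‖ ^ 2)
            (fun i _ => by positivity) (Finset.mem_univ e0)
        rw [norm_mul, mul_pow, h1]
        have : (0:ℝ) ≤ (1 - s)^2 := sq_nonneg _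
        nlinarith
      have hterm2 : ∑ i ∈ Finset.univ.erase e0,
            ‖c * Matrix.toEuclideanCLM (𝕜 := ℂ) (n := Fin n) B x i‖ ^ 2
          ≤ (s / β) ^ 2 * K ^ 2 * ‖x‖ ^ 2 := by
        have h1 : ∑ i ∈ Finset.univ.erase e0,
              ‖c * Matrix.toEuclideanCLM (𝕜 := ℂ) (n := Fin n) B x i‖ ^ 2
            ≤ ∑ i, ‖c * Matrix.toEuclideanCLM (𝕜 := ℂ) (n := Fin n) B x i‖ ^ 2 :=
          Finset.sum_le_sum_of_subset_of_nonneg (Finset.subset_univ _)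
            (fun i _ _ => by positivity)
        have h2 : ∑ i, ‖c * Matrix.toEuclideanCLM (𝕜 := ℂ) (n := Fin n) B x i‖ ^ 2
            = (s / β) ^ 2 * ‖Matrix.toEuclideanCLM (𝕜 := ℂ) (n := Fin n) B x‖ ^ 2 := by
          rw [aux_norm_sq, Finset.mul_sum]
          refine Finset.sum_congr rfl fun i _ => ?_
          rw [norm_mul, mul_pow]
          congr 1
          rw [hcabs]
        have h3 : ‖Matrix.toEuclideanCLM (𝕜 := ℂ) (n := Fin n) B x‖ ^ 2 ≤ K ^ 2 * ‖x‖ ^ 2 := by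
          have := (Matrix.toEuclideanCLM (𝕜 := ℂ) (n := Fin n) B).le_opNorm x
          have hK' : ‖Matrix.toEuclideanCLM (𝕜 := ℂ) (n := Fin n) B x‖ ≤ K * ‖x‖ := this
          nlinarith [norm_nonneg (Matrix.toEuclideanCLM (𝕜 := ℂ) (n := Fin n) B x),
            norm_nonneg x, mul_nonneg hK (norm_nonneg x)]
        calc _ ≤ (s / β) ^ 2 * ‖Matrix.toEuclideanCLM (𝕜 := ℂ) (n := Fin n) B x‖ ^ 2 := by
                  rw [← h2]; exact h1
          _ ≤ (s / β) ^ 2 * (K ^ 2 * ‖x‖ ^ 2) := by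
                  exact mul_le_mul_of_nonneg_left h3 (by positivity)
          _ = (s / β) ^ 2 * K ^ 2 * ‖x‖ ^ 2 := by ring
      rw [hsplit]
      have harith : (1 - s) ^ 2 + (s / β) ^ 2 * K ^ 2 = 1 - s := by
        have hβne : β ≠ 0 := ne_of_gt hβ
        field_simp
        nlinarith [hseq]
      nlinarith [sq_nonneg (‖x‖), hterm1, hterm2]
    -- conclude
    have h1 : opNorm (E + c • B) ≤ Real.sqrt (1 - s) := by
      apply opNorm_le_of_sq _ _ (Real.sqrt_nonneg _)
      intro x
      rw [Real.sq_sqrt (by linarith)]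
      exact key x
    have h2 : Real.sqrt (1 - s) < 1 := by
      nlinarith [Real.sq_sqrt (show (0:ℝ) ≤ 1 - s by linarith), Real.sqrt_nonneg (1 - s)]
    have h3 := h c
    have h4 : (1 : ℝ) ≤ opNorm E := opNorm_E_ge e0
    linarith
  -- Step 2
  intro c
  set M := B + c • E with hM
  apply ContinuousLinearMap.opNorm_le_bound _ (norm_nonneg _)
  intro x
  have hBe0 : Matrix.toEuclideanCLM (𝕜 := ℂ) (n := Fin n) B x e0 = 0 := by
    rw [aux_apply]
    apply Finset.sum_eq_zero
    intro j _
    by_cases hj : j = e0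
    · subst hj; rw [hb]; ring
    · rw [hBmem j hj]; ring
  have hMi : ∀ i : Fin n, i ≠ e0 →
      Matrix.toEuclideanCLM (𝕜 := ℂ) (n := Fin n) M x i
        = Matrix.toEuclideanCLM (𝕜 := ℂ) (n := Fin n) B x i := by
    intro i hi
    rw [aux_apply, aux_apply]
    refine Finset.sum_congr rfl fun j _ => ?_
    simp [hM, Matrix.add_apply, Matrix.smul_apply, hErow' i j hi]
  have hle : ‖Matrix.toEuclideanCLM (𝕜 := ℂ) (n := Fin n) B x‖ ^ 2
      ≤ ‖Matrix.toEuclideanCLM (𝕜 := ℂ) (n := Fin n) M x‖ ^ 2 := by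
    rw [aux_norm_sq, aux_norm_sq,
      ← Finset.add_sum_erase _ _ (Finset.mem_univ e0),
      ← Finset.add_sum_erase _ (fun i => ‖Matrix.toEuclideanCLM (𝕜 := ℂ) (n := Fin n) M x i‖ ^ 2)
        (Finset.mem_univ e0), hBe0]
    have hsum : ∑ i ∈ Finset.univ.erase e0,
          ‖Matrix.toEuclideanCLM (𝕜 := ℂ) (n := Fin n) B x i‖ ^ 2
        = ∑ i ∈ Finset.univ.erase e0,
          ‖Matrix.toEuclideanCLM (𝕜 := ℂ) (n := Fin n) M x i‖ ^ 2 :=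
      Finset.sum_congr rfl fun i hi => by rw [hMi i (Finset.ne_of_mem_erase hi)]
    rw [hsum]
    simp
  have := (Matrix.toEuclideanCLM (𝕜 := ℂ) (n := Fin n) M).le_opNorm x
  have hfin : ‖Matrix.toEuclideanCLM (𝕜 := ℂ) (n := Fin n) B x‖
      ≤ ‖Matrix.toEuclideanCLM (𝕜 := ℂ) (n := Fin n) M x‖ := by
    nlinarith [norm_nonneg (Matrix.toEuclideanCLM (𝕜 := ℂ) (n := Fin n) B x),
      norm_nonneg (Matrix.toEuclideanCLM (𝕜 := ℂ) (n := Fin n) M x)]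
  calc ‖Matrix.toEuclideanCLM (𝕜 := ℂ) (n := Fin n) B x‖
      ≤ ‖Matrix.toEuclideanCLM (𝕜 := ℂ) (n := Fin n) M x‖ := hfin
    _ ≤ opNorm M * ‖x‖ := this
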